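/- Let ν > 0 be real and m, n ∈ ℕ with m ≠ n. Then ∫_{−√ν}^{+√ν} 𝒞_n^ν(X) · 𝒞_m^ν(X) · (1 − X²/ν)^{ν−1/2} dX = 0. -/

import Mathlib

open Real MeasureTheory Filter

/-- Relativistic Hermite polynomial via its Rodrigues formula. -/
noncomputable def relHermite (n : ℕ) (N : ℝ) (X : ℝ) : ℝ :=
  (-1 : ℝ)^n * (1 + X^2/N)^(N + (n : ℝ)) *
    iteratedDeriv n (fun t : ℝ => (1 + t^2/N)^(-N)) X

/-- Cariñena polynomial with positive parameter via its Rodrigues formula. -/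
noncomputable def carinenaPos (n : ℕ) (𝒩 : ℝ) (X : ℝ) : ℝ :=
  (-1 : ℝ)^n * (1 + X^2/𝒩)^(𝒩 + 1/2) *
    iteratedDeriv n (fun t : ℝ => (1 + t^2/𝒩)^((n : ℝ) - 𝒩 - 1/2)) X

/-- Cariñena polynomial with negative parameter 𝒩 = -ν via its Rodrigues formula. -/
noncomputable def carinenaNeg (n : ℕ) (ν : ℝ) (X : ℝ) : ℝ :=
  (-1 : ℝ)^n * (1 - X^2/ν)^((1:ℝ)/2 - ν) *
    iteratedDeriv n (fun t : ℝ => (1 - t^2/ν)^((n : ℝ) + ν - 1/2)) X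

/-- The constant α_{n,ν} = (2ν)_n / (2^n n! (ν+1/2)_n). -/
noncomputable def alphaConst (n : ℕ) (ν : ℝ) : ℝ :=
  (ascPochhammer ℝ n).eval (2*ν) /
    (2^n * (n.factorial : ℝ) * (ascPochhammer ℝ n).eval (ν + 1/2))

/-- Gegenbauer polynomial via its Rodrigues formula. -/
noncomputable def gegenbauer (n : ℕ) (ν : ℝ) (X : ℝ) : ℝ :=
  alphaConst n ν * (-1 : ℝ)^n * (1 - X^2)^((1:ℝ)/2 - ν) *
    iteratedDeriv n (fun t : ℝ => (1 - t^2)^((n : ℝ) + ν - 1/2)) X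

lemma wpos (ν : ℝ) (hν : 0 < ν) {X : ℝ}
    (hX : X ∈ Set.Ioo (-Real.sqrt ν) (Real.sqrt ν)) : 0 < 1 - X^2/ν := by
  have h1 : X^2 < ν := by
    have := sq_lt_sq' hX.1 hX.2
    rwa [Real.sq_sqrt hν.le] at this
  have : X^2/ν < 1 := (div_lt_one hν).2 h1
  linarith

lemma hasDerivAt_w (ν c : ℝ) {X : ℝ} (hw : 0 < 1 - X^2/ν) :
    HasDerivAt (fun x : ℝ => (1 - x^2/ν)^c)
      (c * (1 - X^2/ν)^(c-1) * (-(2*X)/ν)) X := by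
  have h0 : HasDerivAt (fun x : ℝ => x^2/ν) (2*X/ν) X := by
    simpa using ((hasDerivAt_pow 2 X).div_const ν)
  have h1 : HasDerivAt (fun x : ℝ => 1 - x^2/ν) (-(2*X)/ν) X := by
    simpa [neg_div] using h0.const_sub 1
  have := h1.rpow_const (Or.inl hw.ne') (p := c)
  convert this using 1
  ring

lemma iterated_formula (ν E : ℝ) (hν : 0 < ν) (j : ℕ) :
    ∃ Q : Polynomial ℝ, Q.natDegree ≤ j ∧ ∀ X ∈ Set.Ioo (-Real.sqrt ν) (Real.sqrt ν),
      iteratedDeriv j (fun t : ℝ => (1 - t^2/ν)^E) X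
        = Q.eval X * (1 - X^2/ν)^(E - j) := by
  induction j with
  | zero => exact ⟨1, by simp, fun X hX => by simp⟩
  | succ j ih =>
    obtain ⟨Q, hdeg, hQ⟩ := ih
    refine ⟨Polynomial.derivative Q * (1 - Polynomial.C ν⁻¹ * Polynomial.X^2)
        + Polynomial.C ((E - j) * (-2/ν)) * Q * Polynomial.X, ?_, ?_⟩
    · apply (Polynomial.natDegree_add_le _ _).trans
      apply max_le
      · by_cases hQ0 : Q.natDegree = 0
        · rw [Polynomial.derivative_of_natDegree_zero hQ0, zero_mul]
          simp
        · apply (Polynomial.natDegree_mul_le).trans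
          have h1 : (Polynomial.derivative Q).natDegree < Q.natDegree :=
            Polynomial.natDegree_derivative_lt hQ0
          have h2 : (1 - Polynomial.C ν⁻¹ * Polynomial.X^2 : Polynomial ℝ).natDegree ≤ 2 := by
            apply (Polynomial.natDegree_sub_le _ _).trans
            apply max_le (by simp)
            apply (Polynomial.natDegree_mul_le).trans
            simp
          omega
      · apply (Polynomial.natDegree_mul_le).trans
        have h3 : (Polynomial.C ((E - (j:ℝ)) * (-2/ν)) * Q).natDegree ≤ j := by
          apply (Polynomial.natDegree_mul_le).trans
          simp only [Polynomial.natDegree_C, zero_add]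
          exact hdeg
        simp only [Polynomial.natDegree_X]
        omega
    · intro X hX
      have hw := wpos ν hν hX
      have hev : iteratedDeriv j (fun t : ℝ => (1 - t^2/ν)^E)
          =ᶠ[nhds X] (fun x => Q.eval x * (1 - x^2/ν)^(E-(j:ℝ))) :=
        Filter.eventually_of_mem (isOpen_Ioo.mem_nhds hX) hQ
      have hg : HasDerivAt (fun x => Q.eval x * (1 - x^2/ν)^(E-(j:ℝ)))
          ((Polynomial.derivative Q).eval X * (1-X^2/ν)^(E-(j:ℝ))
            + Q.eval X * ((E-(j:ℝ)) * (1-X^2/ν)^(E-(j:ℝ)-1) * (-(2*X)/ν))) X :=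
        (Q.hasDerivAt X).mul (hasDerivAt_w ν (E-(j:ℝ)) hw)
      have hderiv : iteratedDeriv (j+1) (fun t : ℝ => (1 - t^2/ν)^E) X
          = (Polynomial.derivative Q).eval X * (1-X^2/ν)^(E-(j:ℝ))
            + Q.eval X * ((E-(j:ℝ)) * (1-X^2/ν)^(E-(j:ℝ)-1) * (-(2*X)/ν)) := by
        rw [iteratedDeriv_succ, Filter.EventuallyEq.deriv_eq hev]
        exact hg.deriv
      rw [hderiv]
      have h1 : E - ((j:ℝ)) - 1 = E - ((j+1:ℕ):ℝ) := by push_cast; ring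
      have h2 : (1-X^2/ν)^(E - (j:ℝ)) = (1-X^2/ν)^(E - ((j+1:ℕ):ℝ)) * (1-X^2/ν) := by
        rw [← Real.rpow_add_one hw.ne']
        congr 1
        push_cast; ring
      rw [h2, h1]
      simp only [Polynomial.eval_add, Polynomial.eval_mul, Polynomial.eval_sub,
        Polynomial.eval_pow, Polynomial.eval_C, Polynomial.eval_X, Polynomial.eval_one]
      have hν' : ν ≠ 0 := hν.ne'
      field_simp

lemma iterated_hasDerivAt (ν E : ℝ) (hν : 0 < ν) (j : ℕ) {X : ℝ}
    (hX : X ∈ Set.Ioo (-Real.sqrt ν) (Real.sqrt ν)) :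
    HasDerivAt (iteratedDeriv j (fun t : ℝ => (1 - t^2/ν)^E))
      (iteratedDeriv (j+1) (fun t : ℝ => (1 - t^2/ν)^E) X) X := by
  obtain ⟨Q, -, hQ⟩ := iterated_formula ν E hν j
  have hev : iteratedDeriv j (fun t : ℝ => (1 - t^2/ν)^E)
      =ᶠ[nhds X] (fun x => Q.eval x * (1 - x^2/ν)^(E-(j:ℝ))) :=
    Filter.eventually_of_mem (isOpen_Ioo.mem_nhds hX) hQ
  have hg := (Q.hasDerivAt X).mul (hasDerivAt_w ν (E-(j:ℝ)) (wpos ν hν hX))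
  have h1 := hg.congr_of_eventuallyEq hev
  have h2 := h1.deriv
  rw [← iteratedDeriv_succ] at h2
  rw [h2]; exact h1

lemma abs_int (a e : ℝ) (ha : 0 < a) (he : -1 < e) :
    MeasureTheory.IntegrableOn (fun X : ℝ => (a - |X|)^e) (Set.Ioo (-a) a) := by
  have base : IntervalIntegrable (fun x : ℝ => x ^ e) volume 0 a :=
    intervalIntegral.intervalIntegrable_rpow' he
  have h1 : IntervalIntegrable (fun x : ℝ => (a - x) ^ e) volume 0 a := by
    have := base.comp_sub_left a
    simpa using this.symm
  have h2 : IntervalIntegrable (fun x : ℝ => (a + x) ^ e) volume (-a) 0 := by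
    have := base.comp_add_left a
    simpa [add_comm] using this
  have h1' : MeasureTheory.IntegrableOn (fun X : ℝ => (a - |X|)^e) (Set.Ioc 0 a) := by
    have := (intervalIntegrable_iff_integrableOn_Ioc_of_le ha.le).mp h1
    apply this.congr_fun ?_ measurableSet_Ioc
    intro x hx
    show (a - x)^e = (a - |x|)^e
    rw [abs_of_pos hx.1]
  have h2' : MeasureTheory.IntegrableOn (fun X : ℝ => (a - |X|)^e) (Set.Ioc (-a) 0) := by
    have := (intervalIntegrable_iff_integrableOn_Ioc_of_le (by linarith)).mp h2
    apply this.congr_fun ?_ measurableSet_Ioc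
    intro x hx
    show (a + x)^e = (a - |x|)^e
    rw [abs_of_nonpos hx.2, sub_neg_eq_add]
  have := h2'.union h1'
  apply this.mono_set
  rw [Set.Ioc_union_Ioc_eq_Ioc (by linarith) ha.le]
  exact Set.Ioo_subset_Ioc_self

lemma lemD (ν e : ℝ) (hν : 0 < ν) (he : -1 < e) (q : ℝ → ℝ) (hq : Continuous q) :
    MeasureTheory.IntegrableOn (fun X : ℝ => q X * (1 - X^2/ν)^e)
      (Set.Ioo (-Real.sqrt ν) (Real.sqrt ν)) := by
  set a := Real.sqrt ν with ha_def
  have ha : 0 < a := Real.sqrt_pos.2 hν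
  have ha2 : a^2 = ν := Real.sq_sqrt hν.le
  obtain ⟨M, hM⟩ : ∃ M, ∀ x ∈ Set.Icc (-a) a, ‖q x‖ ≤ M :=
    (isCompact_Icc).exists_bound_of_continuousOn hq.continuousOn
  have hM0 : 0 ≤ M := le_trans (norm_nonneg _) (hM 0 (by constructor <;> linarith))
  -- dominating function
  have hdom : MeasureTheory.IntegrableOn
      (fun X : ℝ => M * (1 + a⁻¹^e * (a - |X|)^e)) (Set.Ioo (-a) a) := by
    apply MeasureTheory.Integrable.const_mul
    apply MeasureTheory.Integrable.add
    · exact integrableOn_const measure_Ioo_lt_top.ne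
    · exact (abs_int a e ha he).const_mul _
  refine MeasureTheory.Integrable.mono hdom ?_ ?_
  · apply Measurable.aestronglyMeasurable
    exact hq.measurable.mul ((measurable_const.sub ((measurable_id.pow_const 2).div_const ν)).pow measurable_const)
  · rw [MeasureTheory.ae_restrict_iff' measurableSet_Ioo]
    filter_upwards with X hX
    have hw : 0 < 1 - X^2/ν := wpos ν hν hX
    have habs : |X| < a := abs_lt.2 ⟨hX.1, hX.2⟩
    have habs0 : 0 ≤ |X| := abs_nonneg X
    have hkey : (1 - X^2/ν) ^ e ≤ 1 + a⁻¹^e * (a - |X|)^e := by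
      have hprod : (a - |X|) * (a + |X|) = ν - X^2 := by nlinarith [sq_abs X, ha2]
      have hw_eq : 1 - X^2/ν = (a - |X|) * (a + |X|) / ν := by
        rw [hprod]
        field_simp
      have hlow : (a - |X|) / a ≤ 1 - X^2/ν := by
        rw [hw_eq, ← ha2]
        rw [div_le_div_iff₀ ha (by nlinarith)]
        nlinarith [mul_nonneg (mul_nonneg (sub_nonneg.2 habs.le) ha.le) habs0]
      have hup : 1 - X^2/ν ≤ 1 := by
        have : 0 ≤ X^2/ν := by positivity
        linarith
      rcases le_or_gt 0 e with h0 | h0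
      · have : (1 - X^2/ν) ^ e ≤ 1 := Real.rpow_le_one hw.le hup h0
        have hpos : 0 ≤ a⁻¹^e * (a - |X|)^e :=
          mul_nonneg (Real.rpow_nonneg (inv_nonneg.2 ha.le) e)
            (Real.rpow_nonneg (by linarith) e)
        linarith
      · have h3 : (1 - X^2/ν) ^ e ≤ ((a - |X|)/a) ^ e :=
          Real.rpow_le_rpow_of_nonpos (div_pos (by linarith) ha) hlow h0.le
        have h4 : ((a - |X|)/a) ^ e = (a - |X|)^e * a⁻¹^e := by
          rw [div_eq_mul_inv, Real.mul_rpow (by linarith) (inv_nonneg.2 ha.le)]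
        rw [h4] at h3
        nlinarith [Real.rpow_nonneg (show (0:ℝ) ≤ a - |X| by linarith) e,
          Real.rpow_nonneg (show (0:ℝ) ≤ a⁻¹ by positivity) e]
    have hnq : ‖q X‖ ≤ M := hM X ⟨hX.1.le, hX.2.le⟩
    calc ‖q X * (1 - X^2/ν)^e‖ = ‖q X‖ * ‖(1 - X^2/ν)^e‖ := norm_mul _ _
      _ ≤ M * (1 + a⁻¹^e * (a - |X|)^e) := by
          simp only [Real.norm_eq_abs]
          rw [abs_of_pos (Real.rpow_pos_of_pos hw e)]
          apply mul_le_mul hnq hkey (le_of_lt (Real.rpow_pos_of_pos hw e)) hM0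
      _ ≤ ‖M * (1 + a⁻¹^e * (a - |X|)^e)‖ := le_abs_self _

lemma lemE (ν : ℝ) (hν : 0 < ν) (n j : ℕ) (hj : j ≤ n) (q : ℝ → ℝ) (hq : Continuous q) :
    IntervalIntegrable
      (fun X => iteratedDeriv j (fun t : ℝ => (1 - t^2/ν)^((n:ℝ)+ν-1/2)) X * q X)
      volume (-Real.sqrt ν) (Real.sqrt ν) := by
  obtain ⟨Q, -, hQ⟩ := iterated_formula ν ((n:ℝ)+ν-1/2) hν j
  have ha : (-Real.sqrt ν) ≤ Real.sqrt ν := by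
    have := Real.sqrt_nonneg ν; linarith
  rw [intervalIntegrable_iff_integrableOn_Ioc_of_le ha,
    integrableOn_Ioc_iff_integrableOn_Ioo]
  have he : (-1 : ℝ) < (n:ℝ)+ν-1/2-j := by
    have : (j:ℝ) ≤ n := Nat.cast_le.2 hj
    linarith
  have hD := lemD ν ((n:ℝ)+ν-1/2-(j:ℝ)) hν he (fun X => Q.eval X * q X)
    ((Q.continuous_aeval.mul hq))
  apply hD.congr_fun ?_ measurableSet_Ioo
  intro X hX
  show Q.eval X * q X * (1 - X^2/ν)^((n:ℝ)+ν-1/2-(j:ℝ))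
    = iteratedDeriv j (fun t : ℝ => (1 - t^2/ν)^((n:ℝ)+ν-1/2)) X * q X
  rw [hQ X hX]
  ring

lemma lemT (ν E : ℝ) (hν : 0 < ν) (j : ℕ) (hE : (j:ℝ) < E) (q : ℝ → ℝ) (hq : Continuous q)
    {x₀ : ℝ} (hx₀ : x₀^2 = ν) (l : Filter ℝ) (hl : l ≤ nhds x₀)
    (hmem : Set.Ioo (-Real.sqrt ν) (Real.sqrt ν) ∈ l) :
    Tendsto (fun X => iteratedDeriv j (fun t : ℝ => (1 - t^2/ν)^E) X * q X) l (nhds 0) := by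
  obtain ⟨Q, -, hQ⟩ := iterated_formula ν E hν j
  have hcont : ContinuousAt (fun X : ℝ => Q.eval X * (1 - X^2/ν)^(E-(j:ℝ)) * q X) x₀ := by
    apply ContinuousAt.mul ?_ hq.continuousAt
    apply ContinuousAt.mul Q.continuous_aeval.continuousAt
    apply ContinuousAt.rpow_const (by fun_prop) (Or.inr (by linarith))
  have hval : Q.eval x₀ * (1 - x₀^2/ν)^(E-(j:ℝ)) * q x₀ = 0 := by
    have h0 : 1 - x₀^2/ν = 0 := by field_simp; simp [hx₀]
    rw [h0, Real.zero_rpow (by linarith : (0:ℝ) < E - (j:ℝ)).ne']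
    ring
  have htd : Tendsto (fun X : ℝ => Q.eval X * (1 - X^2/ν)^(E-(j:ℝ)) * q X) l (nhds 0) := by
    have := hcont.tendsto
    rw [hval] at this
    exact this.mono_left hl
  refine htd.congr' ?_
  filter_upwards [hmem] with X hX
  rw [hQ X hX]

lemma lemC (ν : ℝ) (hν : 0 < ν) (n : ℕ) :
    ∀ j, j ≤ n → ∀ P : Polynomial ℝ, P.natDegree < j →
    ∫ X in (-Real.sqrt ν)..(Real.sqrt ν),
      iteratedDeriv j (fun t : ℝ => (1 - t^2/ν)^((n:ℝ)+ν-1/2)) X * P.eval X = 0 := by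
  intro j
  induction j with
  | zero => intro _ P hP; omega
  | succ j ih =>
    intro hjn P hP
    have ha : 0 < Real.sqrt ν := Real.sqrt_pos.2 hν
    have hab : -Real.sqrt ν < Real.sqrt ν := by linarith
    have hE : (j:ℝ) < (n:ℝ)+ν-1/2 := by
      have : (j:ℝ) + 1 ≤ (n:ℝ) := by exact_mod_cast hjn
      linarith
    have hderiv : ∀ X ∈ Set.Ioo (-Real.sqrt ν) (Real.sqrt ν),
        HasDerivAt
          (fun X => iteratedDeriv j (fun t : ℝ => (1 - t^2/ν)^((n:ℝ)+ν-1/2)) X * P.eval X)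
          (iteratedDeriv (j+1) (fun t : ℝ => (1 - t^2/ν)^((n:ℝ)+ν-1/2)) X * P.eval X
            + iteratedDeriv j (fun t : ℝ => (1 - t^2/ν)^((n:ℝ)+ν-1/2)) X
              * (Polynomial.derivative P).eval X) X :=
      fun X hX => (iterated_hasDerivAt ν _ hν j hX).mul (P.hasDerivAt X)
    have hint1 := lemE ν hν n (j+1) hjn (fun X => P.eval X) P.continuous_aeval
    have hint2 := lemE ν hν n j (by omega) (fun X => (Polynomial.derivative P).eval X)
      (Polynomial.derivative P).continuous_aeval
    have hsq1 : (-Real.sqrt ν)^2 = ν := by rw [neg_pow]; simp [Real.sq_sqrt hν.le]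
    have hsq2 : (Real.sqrt ν)^2 = ν := Real.sq_sqrt hν.le
    have htd1 := lemT ν ((n:ℝ)+ν-1/2) hν j hE (fun X => P.eval X) P.continuous_aeval
      hsq1 (nhdsWithin (-Real.sqrt ν) (Set.Ioi (-Real.sqrt ν))) nhdsWithin_le_nhds
      (Ioo_mem_nhdsGT hab)
    have htd2 := lemT ν ((n:ℝ)+ν-1/2) hν j hE (fun X => P.eval X) P.continuous_aeval
      hsq2 (nhdsWithin (Real.sqrt ν) (Set.Iio (Real.sqrt ν))) nhdsWithin_le_nhds
      (Ioo_mem_nhdsLT hab)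
    have hFTC := intervalIntegral.integral_eq_sub_of_hasDerivAt_of_tendsto hab hderiv
      (hint1.add hint2) htd1 htd2
    rw [intervalIntegral.integral_add hint1 hint2] at hFTC
    have hB : ∫ X in (-Real.sqrt ν)..(Real.sqrt ν),
        iteratedDeriv j (fun t : ℝ => (1 - t^2/ν)^((n:ℝ)+ν-1/2)) X
          * (Polynomial.derivative P).eval X = 0 := by
      by_cases h0 : P.natDegree = 0
      · rw [Polynomial.derivative_of_natDegree_zero h0]
        simp
      · exact ih (by omega) _ (by
          have := Polynomial.natDegree_derivative_lt h0
          omega)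
    rw [hB] at hFTC
    simpa using hFTC

theorem carinena_neg_orthogonality (ν : ℝ) (hν : 0 < ν) (m n : ℕ) (hmn : m ≠ n) :
    ∫ X in Set.Ioo (-Real.sqrt ν) (Real.sqrt ν),
        carinenaNeg n ν X * carinenaNeg m ν X * (1 - X^2/ν)^(ν - 1/2) = 0 := by
  wlog hlt : m < n generalizing m n
  · have h2 : n < m := lt_of_le_of_ne (not_lt.mp hlt) hmn.symm
    rw [← this n m hmn.symm h2]
    congr 1
    ext X
    ring
  obtain ⟨Qm, hQmdeg, hQm⟩ := iterated_formula ν ((m:ℝ)+ν-1/2) hν m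
  have ha : 0 < Real.sqrt ν := Real.sqrt_pos.2 hν
  have hab : -Real.sqrt ν ≤ Real.sqrt ν := by linarith
  set P : Polynomial ℝ := Polynomial.C ((-1:ℝ)^(n+m)) * Qm with hP
  have hPdeg : P.natDegree < n := by
    rw [hP]
    have := Polynomial.natDegree_mul_le (p := Polynomial.C ((-1:ℝ)^(n+m))) (q := Qm)
    simp only [Polynomial.natDegree_C, zero_add] at this
    omega
  have key := lemC ν hν n n le_rfl P hPdeg
  have hset : (∫ X in Set.Ioo (-Real.sqrt ν) (Real.sqrt ν),
        carinenaNeg n ν X * carinenaNeg m ν X * (1 - X^2/ν)^(ν - 1/2))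
      = ∫ X in Set.Ioo (-Real.sqrt ν) (Real.sqrt ν),
        iteratedDeriv n (fun t : ℝ => (1 - t^2/ν)^((n:ℝ)+ν-1/2)) X * P.eval X := by
    apply MeasureTheory.setIntegral_congr_fun measurableSet_Ioo
    intro X hX
    have hw := wpos ν hν hX
    have hexp : (m:ℝ)+ν-1/2 - (m:ℝ) = ν - 1/2 := by ring
    show carinenaNeg n ν X * carinenaNeg m ν X * (1 - X^2/ν)^(ν - 1/2)
      = iteratedDeriv n (fun t : ℝ => (1 - t^2/ν)^((n:ℝ)+ν-1/2)) X * P.eval X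
    rw [hP]
    simp only [carinenaNeg, Polynomial.eval_mul, Polynomial.eval_C]
    rw [hQm X hX, hexp, pow_add]
    set u := (1 - X^2/ν)^((1:ℝ)/2-ν) with hu
    set v := (1 - X^2/ν)^(ν-1/2) with hv
    have hcancel : u * v = 1 := by
      rw [hu, hv, ← Real.rpow_add hw]
      norm_num
    have hcancel2 : u * v * (u * v) = 1 := by rw [hcancel]; ring
    set G := iteratedDeriv n (fun t : ℝ => (1 - t^2/ν)^((n:ℝ)+ν-1/2)) X with hG
    linear_combination ((-1:ℝ)^n * (-1:ℝ)^m * G * Qm.eval X) * hcancel2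
  rw [hset]
  rw [← MeasureTheory.integral_Ioc_eq_integral_Ioo, ← intervalIntegral.integral_of_le hab]
  exact key
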